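/- arXiv:1407.1478 — 8 statements merged into one kernel-verified Lean document; each statement's English description precedes it below -/
import Mathlib

section
/- If R = aΠ + bΦ + cΨ for real numbers a, b, c, then for every unit vector X in V one has R(X,JX,JX,X) = a + b·|X_D|² + c·|X_D|⁴. -/
open scoped RealInnerProductSpace
open Module

theorem stmt3 {V : Type*} [NormedAddCommGroup V] [InnerProductSpace ℝ V] [FiniteDimensional ℝ V]
    (J : V →ₗ[ℝ] V) (hJ2 : ∀ x, J (J x) = -x)
    (hJskew : ∀ x y, ⟪J x, y⟫ = -⟪x, J y⟫)
    (D : Submodule ℝ V) (hDdim : finrank ℝ D = 2)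
    (hDJ : ∀ x ∈ D, J x ∈ D)
    (h : V → V → ℝ)
    (hh : ∀ x y, h x y = ⟪(D.orthogonalProjection x : V), (D.orthogonalProjection y : V)⟫)
    (Pp : V → V → V → V → ℝ)
    (hPp : ∀ X Y Z U, Pp X Y Z U = (1/4) * (⟪Y, Z⟫ * ⟪X, U⟫ - ⟪X, Z⟫ * ⟪Y, U⟫
      + ⟪J Y, Z⟫ * ⟪J X, U⟫ - ⟪J X, Z⟫ * ⟪J Y, U⟫ - 2 * ⟪J X, Y⟫ * ⟪J Z, U⟫))
    (Ph : V → V → V → V → ℝ)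
    (hPh : ∀ X Y Z U, Ph X Y Z U = (1/8) * (⟪Y, Z⟫ * h X U - ⟪X, Z⟫ * h Y U
      + ⟪X, U⟫ * h Y Z - ⟪Y, U⟫ * h X Z
      + ⟪J Y, Z⟫ * h (J X) U - ⟪J X, Z⟫ * h (J Y) U
      + ⟪J X, U⟫ * h (J Y) Z - ⟪J Y, U⟫ * h (J X) Z
      - 2 * ⟪J X, Y⟫ * h (J Z) U - 2 * ⟪J Z, U⟫ * h (J X) Y))
    (Ps : V → V → V → V → ℝ)
    (hPs : ∀ X Y Z U, Ps X Y Z U = -(h (J X) Y * h (J Z) U))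
    (a b c : ℝ) (R : V → V → V → V → ℝ)
    (hR : ∀ X Y Z U, R X Y Z U = a * Pp X Y Z U + b * Ph X Y Z U + c * Ps X Y Z U) :
    ∀ X : V, ‖X‖ = 1 →
      R X (J X) (J X) X
        = a + b * ‖(D.orthogonalProjection X : V)‖ ^ 2
            + c * ‖(D.orthogonalProjection X : V)‖ ^ 4 := by
  intro X hX
  have skew0 : ∀ v : V, ⟪J v, v⟫ = 0 := by
    intro v
    have h1 := hJskew v v
    have h2 : ⟪v, J v⟫ = ⟪J v, v⟫ := real_inner_comm _ _
    linarith
  have skew0' : ∀ v : V, ⟪v, J v⟫ = 0 := by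
    intro v; rw [real_inner_comm]; exact skew0 v
  have hJinner : ∀ v : V, ⟪J v, J v⟫ = ⟪v, v⟫ := by
    intro v
    rw [hJskew, hJ2, inner_neg_right]; ring
  have hXX : ⟪X, X⟫ = 1 := by
    rw [real_inner_self_eq_norm_sq, hX]; norm_num
  have hJXJX : ⟪J X, J X⟫ = 1 := by rw [hJinner, hXX]
  have hJ2X : J (J X) = -X := hJ2 X
  -- projection commutes with J
  have hPJ : ∀ x : V, (D.orthogonalProjection (J x) : V) = J (D.orthogonalProjection x : V) := by
    intro x
    apply Submodule.eq_starProjection_of_mem_of_inner_eq_zero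
    · exact hDJ _ (D.orthogonalProjection x).2
    · intro w hw
      have hsub : J x - J (D.orthogonalProjection x : V)
          = J (x - (D.orthogonalProjection x : V)) := by rw [map_sub]
      rw [hsub, hJskew]
      have hmem : x - (D.orthogonalProjection x : V) ∈ Dᗮ := D.sub_starProjection_mem_orthogonal x
      have := (Submodule.mem_orthogonal D _).mp hmem (J w) (hDJ w hw)
      rw [real_inner_comm] at this
      rw [this]; ring
  set P : V := (D.orthogonalProjection X : V) with hP
  set n : ℝ := ⟪P, P⟫ with hn
  have hhXX : h X X = n := by rw [hh]
  have hhJXJX : h (J X) (J X) = n := by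
    rw [hh, hPJ, hJinner]
  have hhJXX : h (J X) X = 0 := by rw [hh, hPJ]; exact skew0 P
  have hhXJX : h X (J X) = 0 := by rw [hh, hPJ]; exact skew0' P
  have hPneg : (D.orthogonalProjection (-X) : V) = -P := by
    rw [map_neg]; rfl
  have hhnXX : h (-X) X = -n := by rw [hh, hPneg, inner_neg_left]
  have hhnXJX : h (-X) (J X) = 0 := by
    rw [hh, hPneg, hPJ, inner_neg_left, skew0' P]; ring
  have hnorm : ‖P‖ ^ 2 = n := by rw [hn, real_inner_self_eq_norm_sq]
  rw [hR, hPp, hPh, hPs, hJ2X]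
  simp only [inner_neg_left, hJXJX, hXX, skew0 X, skew0' X,
    hhXX, hhJXJX, hhJXX, hhXJX, hhnXX, hhnXJX, ← hnorm]
  ring
end

section
/- With I = J̄ (the opposite structure), Π(J̄X, J̄Y, Z, U) − Π(X,Y,Z,U) = (1/2)[m(IY,Z)h(IX,U) + m(IX,U)h(IY,Z) − m(IX,Z)h(IY,U) − h(IX,Z)m(IY,U) − h(Y,Z)m(X,U) − m(Y,Z)h(X,U) + h(X,Z)m(Y,U) + m(X,Z)h(Y,U)] for all X,Y,Z,U. -/
open scoped RealInnerProductSpace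
open Module

theorem stmt6 {V : Type*} [NormedAddCommGroup V] [InnerProductSpace ℝ V] [FiniteDimensional ℝ V] (hV : finrank ℝ V = 4)
    (J : V →ₗ[ℝ] V) (hJ2 : ∀ x, J (J x) = -x)
    (hJskew : ∀ x y, ⟪J x, y⟫ = -⟪x, J y⟫)
    (D : Submodule ℝ V) (hDdim : finrank ℝ D = 2)
    (hDJ : ∀ x ∈ D, J x ∈ D)
    (h : V → V → ℝ)
    (hh : ∀ x y, h x y = ⟪(D.orthogonalProjection x : V), (D.orthogonalProjection y : V)⟫)
    (m : V → V → ℝ)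
    (hm : ∀ x y, m x y = ⟪(Dᗮ.orthogonalProjection x : V), (Dᗮ.orthogonalProjection y : V)⟫)
    (Jb : V →ₗ[ℝ] V) (hJbD : ∀ x ∈ D, Jb x = J x)
    (hJbE : ∀ x ∈ Dᗮ, Jb x = -(J x))
    (Pp : V → V → V → V → ℝ)
    (hPp : ∀ X Y Z U, Pp X Y Z U = (1/4) * (⟪Y, Z⟫ * ⟪X, U⟫ - ⟪X, Z⟫ * ⟪Y, U⟫
      + ⟪J Y, Z⟫ * ⟪J X, U⟫ - ⟪J X, Z⟫ * ⟪J Y, U⟫ - 2 * ⟪J X, Y⟫ * ⟪J Z, U⟫)) :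
    ∀ X Y Z U : V, Pp (Jb X) (Jb Y) Z U - Pp X Y Z U
      = (1/2) * (m (Jb Y) Z * h (Jb X) U + m (Jb X) U * h (Jb Y) Z - m (Jb X) Z * h (Jb Y) U
        - h (Jb X) Z * m (Jb Y) U - h Y Z * m X U - m Y Z * h X U
        + h X Z * m Y U + m X Z * h Y U) := by
  intro X Y Z U
  have hP : ∀ x : V, ((D.orthogonalProjection x : V)) ∈ D := fun x => SetLike.coe_mem _
  have hQ : ∀ x : V, ((Dᗮ.orthogonalProjection x : V)) ∈ Dᗮ := fun x => SetLike.coe_mem _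
  have hsum : ∀ x : V, (D.orthogonalProjection x : V) + (Dᗮ.orthogonalProjection x : V) = x :=
    fun x => D.starProjection_add_starProjection_orthogonal x
  have ho : ∀ {u v : V}, u ∈ D → v ∈ Dᗮ → ⟪u, v⟫ = 0 :=
    fun hu hv => Submodule.inner_right_of_mem_orthogonal hu hv
  have ho' : ∀ {u v : V}, u ∈ D → v ∈ Dᗮ → ⟪v, u⟫ = 0 :=
    fun hu hv => Submodule.inner_left_of_mem_orthogonal hu hv
  have hJQmem : ∀ x ∈ Dᗮ, J x ∈ Dᗮ := by
    intro x hx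
    rw [Submodule.mem_orthogonal]
    intro u hu
    rw [real_inner_comm, hJskew, Submodule.inner_left_of_mem_orthogonal (hDJ u hu) hx, neg_zero]
  have hkey : ∀ (u1 u2 v1 v2 : V), u1 ∈ D → u2 ∈ Dᗮ → v1 ∈ D → v2 ∈ Dᗮ →
      ⟪u1 + u2, v1 + v2⟫ = ⟪u1, v1⟫ + ⟪u2, v2⟫ := by
    intro u1 u2 v1 v2 h1 h2 h3 h4
    rw [inner_add_left, inner_add_right, inner_add_right, ho h1 h4, ho' h3 h2,
      add_zero, zero_add]
  have hJbx : ∀ x : V, Jb x = J (D.orthogonalProjection x : V)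
      + -(J (Dᗮ.orthogonalProjection x : V)) := by
    intro x
    conv_lhs => rw [← hsum x]
    rw [map_add, hJbD _ (hP x), hJbE _ (hQ x)]
  have hJJbx : ∀ x : V, J (Jb x) = -(D.orthogonalProjection x : V)
      + (Dᗮ.orthogonalProjection x : V) := by
    intro x
    rw [hJbx x, map_add, map_neg, hJ2, hJ2, neg_neg]
  have EA : ∀ x y : V, ⟪Jb x, y⟫ = ⟪J (D.orthogonalProjection x : V), (D.orthogonalProjection y : V)⟫
      - ⟪J (Dᗮ.orthogonalProjection x : V), (Dᗮ.orthogonalProjection y : V)⟫ := by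
    intro x y
    conv_lhs => rw [hJbx x, ← hsum y]
    rw [hkey _ _ _ _ (hDJ _ (hP x)) (neg_mem (hJQmem _ (hQ x))) (hP y) (hQ y), inner_neg_left]
    ring
  have EB : ∀ x y : V, ⟪J (Jb x), y⟫
      = ⟪(Dᗮ.orthogonalProjection x : V), (Dᗮ.orthogonalProjection y : V)⟫
      - ⟪(D.orthogonalProjection x : V), (D.orthogonalProjection y : V)⟫ := by
    intro x y
    conv_lhs => rw [hJJbx x, ← hsum y]
    rw [hkey _ _ _ _ (neg_mem (hP x)) (hQ x) (hP y) (hQ y), inner_neg_left]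
    ring
  have EC : ∀ x y : V, ⟪J x, y⟫ = ⟪J (D.orthogonalProjection x : V), (D.orthogonalProjection y : V)⟫
      + ⟪J (Dᗮ.orthogonalProjection x : V), (Dᗮ.orthogonalProjection y : V)⟫ := by
    intro x y
    conv_lhs => rw [← hsum x, ← hsum y, map_add]
    rw [hkey _ _ _ _ (hDJ _ (hP x)) (hJQmem _ (hQ x)) (hP y) (hQ y)]
  have ED : ∀ x y : V, ⟪x, y⟫ = ⟪(D.orthogonalProjection x : V), (D.orthogonalProjection y : V)⟫
      + ⟪(Dᗮ.orthogonalProjection x : V), (Dᗮ.orthogonalProjection y : V)⟫ := by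
    intro x y
    conv_lhs => rw [← hsum x, ← hsum y]
    rw [hkey _ _ _ _ (hP x) (hQ x) (hP y) (hQ y)]
  have EE : ∀ x y : V, ⟪J (Jb x), Jb y⟫
      = ⟪J (D.orthogonalProjection x : V), (D.orthogonalProjection y : V)⟫
      + ⟪J (Dᗮ.orthogonalProjection x : V), (Dᗮ.orthogonalProjection y : V)⟫ := by
    intro x y
    conv_lhs => rw [hJJbx x, hJbx y]
    rw [hkey _ _ _ _ (neg_mem (hP x)) (hQ x) (hDJ _ (hP y)) (neg_mem (hJQmem _ (hQ y))),
      inner_neg_left, inner_neg_right, hJskew ((D.orthogonalProjection x : V)),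
      hJskew ((Dᗮ.orthogonalProjection x : V))]
  have Eh : ∀ x y : V, h x y = ⟪x, (D.orthogonalProjection y : V)⟫ := by
    intro x y
    rw [hh]
    have h0 := D.starProjection_inner_eq_zero x _ (hP y)
    rw [inner_sub_left, Submodule.starProjection_apply] at h0
    linarith
  have Em : ∀ x y : V, m x y = ⟪x, (Dᗮ.orthogonalProjection y : V)⟫ := by
    intro x y
    rw [hm]
    have h0 := Dᗮ.starProjection_inner_eq_zero x _ (hQ y)
    rw [inner_sub_left, Submodule.starProjection_apply] at h0
    linarith
  have EhJb : ∀ x y : V, h (Jb x) y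
      = ⟪J (D.orthogonalProjection x : V), (D.orthogonalProjection y : V)⟫ := by
    intro x y
    rw [Eh, hJbx x, inner_add_left, inner_neg_left, ho' (hP y) (hJQmem _ (hQ x)), neg_zero,
      add_zero]
  have EmJb : ∀ x y : V, m (Jb x) y
      = -⟪J (Dᗮ.orthogonalProjection x : V), (Dᗮ.orthogonalProjection y : V)⟫ := by
    intro x y
    rw [Em, hJbx x, inner_add_left, inner_neg_left, ho (hDJ _ (hP x)) (hQ y), zero_add]
  rw [hPp, hPp, EE X Y, EA Y Z, EA X U, EA X Z, EA Y U, EB Y Z, EB X U, EB X Z, EB Y U,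
    EC X Y, EC Y Z, EC X U, EC X Z, EC Y U, ED Y Z, ED X U, ED X Z, ED Y U,
    EmJb Y Z, EhJb X U, EmJb X U, EhJb Y Z, EmJb X Z, EhJb Y U, EhJb X Z, EmJb Y U,
    hh Y Z, hm X U, hm Y Z, hh X U, hh X Z, hm Y U, hm X Z, hh Y U]
  ring
end

section
/- With I = J̄, Φ(J̄X, J̄Y, Z, U) − Φ(X,Y,Z,U) = (1/4)[m(IY,Z)h(IX,U) + m(IX,U)h(IY,Z) − m(IX,Z)h(IY,U) − h(IX,Z)m(IY,U) − h(Y,Z)m(X,U) − m(Y,Z)h(X,U) + h(X,Z)m(Y,U) + m(X,Z)h(Y,U)] for all X,Y,Z,U. -/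
open scoped RealInnerProductSpace
open Module

theorem stmt7 {V : Type*} [NormedAddCommGroup V] [InnerProductSpace ℝ V] [FiniteDimensional ℝ V] (hV : finrank ℝ V = 4)
    (J : V →ₗ[ℝ] V) (hJ2 : ∀ x, J (J x) = -x)
    (hJskew : ∀ x y, ⟪J x, y⟫ = -⟪x, J y⟫)
    (D : Submodule ℝ V) (hDdim : finrank ℝ D = 2)
    (hDJ : ∀ x ∈ D, J x ∈ D)
    (h : V → V → ℝ)
    (hh : ∀ x y, h x y = ⟪(D.orthogonalProjectionOnto x : V), (D.orthogonalProjectionOnto y : V)⟫)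
    (m : V → V → ℝ)
    (hm : ∀ x y, m x y = ⟪(Dᗮ.orthogonalProjectionOnto x : V), (Dᗮ.orthogonalProjectionOnto y : V)⟫)
    (Jb : V →ₗ[ℝ] V) (hJbD : ∀ x ∈ D, Jb x = J x)
    (hJbE : ∀ x ∈ Dᗮ, Jb x = -(J x))
    (Ph : V → V → V → V → ℝ)
    (hPh : ∀ X Y Z U, Ph X Y Z U = (1/8) * (⟪Y, Z⟫ * h X U - ⟪X, Z⟫ * h Y U
      + ⟪X, U⟫ * h Y Z - ⟪Y, U⟫ * h X Z
      + ⟪J Y, Z⟫ * h (J X) U - ⟪J X, Z⟫ * h (J Y) U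
      + ⟪J X, U⟫ * h (J Y) Z - ⟪J Y, U⟫ * h (J X) Z
      - 2 * ⟪J X, Y⟫ * h (J Z) U - 2 * ⟪J Z, U⟫ * h (J X) Y)) :
    ∀ X Y Z U : V, Ph (Jb X) (Jb Y) Z U - Ph X Y Z U
      = (1/4) * (m (Jb Y) Z * h (Jb X) U + m (Jb X) U * h (Jb Y) Z - m (Jb X) Z * h (Jb Y) U
        - h (Jb X) Z * m (Jb Y) U - h Y Z * m X U - m Y Z * h X U
        + h X Z * m Y U + m X Z * h Y U) := by
  have hJE : ∀ y ∈ Dᗮ, J y ∈ Dᗮ := by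
    intro y hy
    rw [Submodule.mem_orthogonal]
    intro z hz
    rw [real_inner_comm, hJskew, Submodule.inner_left_of_mem_orthogonal (hDJ z hz) hy, neg_zero]
  have hdec : ∀ x : V, (D.orthogonalProjectionOnto x : V) + (Dᗮ.orthogonalProjectionOnto x : V) = x :=
    fun x => D.starProjection_add_starProjection_orthogonal x
  have hpDmem : ∀ x : V, (D.orthogonalProjectionOnto x : V) ∈ D := fun x => (D.orthogonalProjectionOnto x).2
  have hpEmem : ∀ x : V, (Dᗮ.orthogonalProjectionOnto x : V) ∈ Dᗮ :=
    fun x => (Dᗮ.orthogonalProjectionOnto x).2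
  have hpD_of_mem : ∀ x ∈ D, (D.orthogonalProjectionOnto x : V) = x :=
    fun x hx => Submodule.starProjection_eq_self_iff.mpr hx
  have hpE_of_mem : ∀ x ∈ Dᗮ, (Dᗮ.orthogonalProjectionOnto x : V) = x :=
    fun x hx => Submodule.starProjection_eq_self_iff.mpr hx
  have hpD_of_memE : ∀ x ∈ Dᗮ, (D.orthogonalProjectionOnto x : V) = 0 := by
    intro x hx
    rw [Submodule.orthogonalProjectionOnto_apply_of_mem_orthogonal (K := D) hx, Submodule.coe_zero]
  have hpE_of_memD : ∀ x ∈ D, (Dᗮ.orthogonalProjectionOnto x : V) = 0 := by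
    intro x hx
    rw [Submodule.orthogonalProjectionOnto_apply_of_mem_orthogonal (K := Dᗮ)
      (D.le_orthogonal_orthogonal hx), Submodule.coe_zero]
  have hJb : ∀ x : V, Jb x
      = J (D.orthogonalProjectionOnto x : V) - J (Dᗮ.orthogonalProjectionOnto x : V) := by
    intro x
    conv_lhs => rw [← hdec x]
    rw [map_add, hJbD _ (hpDmem x), hJbE _ (hpEmem x), sub_eq_add_neg]
  have lemC : ∀ x : V, (D.orthogonalProjectionOnto (J x) : V)
      = J (D.orthogonalProjectionOnto x : V) := by
    intro x
    conv_lhs => rw [← hdec x, map_add]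
    rw [map_add, Submodule.coe_add, hpD_of_mem _ (hDJ _ (hpDmem x)),
      hpD_of_memE _ (hJE _ (hpEmem x)), add_zero]
  have lemD : ∀ x : V, (Dᗮ.orthogonalProjectionOnto (J x) : V)
      = J (Dᗮ.orthogonalProjectionOnto x : V) := by
    intro x
    conv_lhs => rw [← hdec x, map_add]
    rw [map_add, Submodule.coe_add, hpE_of_mem _ (hJE _ (hpEmem x)),
      hpE_of_memD _ (hDJ _ (hpDmem x)), zero_add]
  have lemA : ∀ x : V, (D.orthogonalProjectionOnto (Jb x) : V)
      = J (D.orthogonalProjectionOnto x : V) := by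
    intro x
    rw [hJb, map_sub, Submodule.coe_sub, hpD_of_mem _ (hDJ _ (hpDmem x)),
      hpD_of_memE _ (hJE _ (hpEmem x)), sub_zero]
  have lemB : ∀ x : V, (Dᗮ.orthogonalProjectionOnto (Jb x) : V)
      = -(J (Dᗮ.orthogonalProjectionOnto x : V)) := by
    intro x
    rw [hJb, map_sub, Submodule.coe_sub, hpE_of_mem _ (hJE _ (hpEmem x)),
      hpE_of_memD _ (hDJ _ (hpDmem x)), zero_sub]
  have splitI : ∀ x y : V, ⟪x, y⟫
      = ⟪(D.orthogonalProjectionOnto x : V), (D.orthogonalProjectionOnto y : V)⟫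
        + ⟪(Dᗮ.orthogonalProjectionOnto x : V), (Dᗮ.orthogonalProjectionOnto y : V)⟫ := by
    intro x y
    conv_lhs => rw [← hdec x, ← hdec y]
    rw [inner_add_left, inner_add_right, inner_add_right,
      Submodule.inner_right_of_mem_orthogonal (hpDmem x) (hpEmem y),
      Submodule.inner_left_of_mem_orthogonal (hpDmem y) (hpEmem x)]
    ring
  have flip : ∀ x y : V, ⟪x, J y⟫ = -⟪J x, y⟫ := by
    intro x y; rw [hJskew]; ring
  intro X Y Z U
  rw [hPh, hPh]
  simp only [hh, hm]
  rw [splitI (Jb Y) Z, splitI (Jb X) Z, splitI (Jb X) U, splitI (Jb Y) U,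
    splitI (J (Jb Y)) Z, splitI (J (Jb X)) Z, splitI (J (Jb X)) U, splitI (J (Jb Y)) U,
    splitI (J (Jb X)) (Jb Y), splitI (J Z) U,
    splitI Y Z, splitI X Z, splitI X U, splitI Y U,
    splitI (J Y) Z, splitI (J X) Z, splitI (J X) U, splitI (J Y) U,
    splitI (J X) Y]
  simp only [lemA, lemB, lemC, lemD, hJ2, map_neg, inner_neg_left, inner_neg_right, neg_neg]
  simp only [flip]
  ring
end

section
/- The tensor R = aΠ + bΦ + cΨ satisfies the first Gray condition with respect to J̄, i.e. R(J̄X, J̄Y, Z, U) = R(X,Y,Z,U) for all X,Y,Z,U, if and only if 2a + b = 0. (Here one assumes D and E are both nonzero, so the difference tensor is nonzero unless its coefficient vanishes.) -/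
open scoped RealInnerProductSpace
open Module

theorem stmt8 {V : Type*} [NormedAddCommGroup V] [InnerProductSpace ℝ V] [FiniteDimensional ℝ V] (hV : finrank ℝ V = 4)
    (J : V →ₗ[ℝ] V) (hJ2 : ∀ x, J (J x) = -x)
    (hJskew : ∀ x y, ⟪J x, y⟫ = -⟪x, J y⟫)
    (D : Submodule ℝ V) (hDdim : finrank ℝ D = 2)
    (hDJ : ∀ x ∈ D, J x ∈ D)
    (h : V → V → ℝ)
    (hh : ∀ x y, h x y = ⟪(Submodule.orthogonalProjectionOnto D x : V), (Submodule.orthogonalProjectionOnto D y : V)⟫)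
    (m : V → V → ℝ)
    (hm : ∀ x y, m x y = ⟪(Submodule.orthogonalProjectionOnto Dᗮ x : V), (Submodule.orthogonalProjectionOnto Dᗮ y : V)⟫)
    (Jb : V →ₗ[ℝ] V) (hJbD : ∀ x ∈ D, Jb x = J x)
    (hJbE : ∀ x ∈ Dᗮ, Jb x = -(J x))
    (Pp : V → V → V → V → ℝ)
    (hPp : ∀ X Y Z U, Pp X Y Z U = (1/4) * (⟪Y, Z⟫ * ⟪X, U⟫ - ⟪X, Z⟫ * ⟪Y, U⟫
      + ⟪J Y, Z⟫ * ⟪J X, U⟫ - ⟪J X, Z⟫ * ⟪J Y, U⟫ - 2 * ⟪J X, Y⟫ * ⟪J Z, U⟫))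
    (Ph : V → V → V → V → ℝ)
    (hPh : ∀ X Y Z U, Ph X Y Z U = (1/8) * (⟪Y, Z⟫ * h X U - ⟪X, Z⟫ * h Y U
      + ⟪X, U⟫ * h Y Z - ⟪Y, U⟫ * h X Z
      + ⟪J Y, Z⟫ * h (J X) U - ⟪J X, Z⟫ * h (J Y) U
      + ⟪J X, U⟫ * h (J Y) Z - ⟪J Y, U⟫ * h (J X) Z
      - 2 * ⟪J X, Y⟫ * h (J Z) U - 2 * ⟪J Z, U⟫ * h (J X) Y))
    (Ps : V → V → V → V → ℝ)
    (hPs : ∀ X Y Z U, Ps X Y Z U = -(h (J X) Y * h (J Z) U))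
    (a b c : ℝ) (R : V → V → V → V → ℝ)
    (hR : ∀ X Y Z U, R X Y Z U = a * Pp X Y Z U + b * Ph X Y Z U + c * Ps X Y Z U) :
    (∀ X Y Z U : V, R (Jb X) (Jb Y) Z U = R X Y Z U) ↔ 2 * a + b = 0 := by
  have fswap : ∀ u v : V, ⟪u, J v⟫ = -⟪J u, v⟫ := by
    intro u v; have := hJskew u v; linarith
  have fJJ : ∀ u v : V, ⟪J u, J v⟫ = ⟪u, v⟫ := by
    intro u v; rw [hJskew, hJ2, inner_neg_right, neg_neg]
  have gself : ∀ u : V, ⟪J u, u⟫ = 0 := by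
    intro u
    have h1 := hJskew u u
    have h2 := real_inner_comm u (J u)
    linarith
  have fJE : ∀ v ∈ Dᗮ, J v ∈ Dᗮ := by
    intro v hv
    rw [Submodule.mem_orthogonal]
    intro u hu
    rw [fswap]
    rw [Submodule.inner_right_of_mem_orthogonal (hDJ u hu) hv]
    ring
  have pD : ∀ v ∈ D, ((Submodule.orthogonalProjectionOnto D v : V)) = v := fun v hv =>
    Submodule.starProjection_eq_self_iff.mpr hv
  have pD0 : ∀ v ∈ Dᗮ, ((Submodule.orthogonalProjectionOnto D v : V)) = 0 := fun v hv => by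
    rw [Submodule.orthogonalProjectionOnto_apply_of_mem_orthogonal hv]; rfl
  have hcross : ∀ u v : V, u ∈ D → v ∈ Dᗮ → ⟪u, v⟫ = 0 := fun u v hu hv =>
    Submodule.inner_right_of_mem_orthogonal hu hv
  have hcross' : ∀ u v : V, u ∈ Dᗮ → v ∈ D → ⟪u, v⟫ = 0 := fun u v hu hv =>
    Submodule.inner_left_of_mem_orthogonal hv hu
  have key : ∀ x1 x2 y1 y2 z1 z2 u1 u2 : V, x1 ∈ D → x2 ∈ Dᗮ → y1 ∈ D → y2 ∈ Dᗮ →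
      z1 ∈ D → z2 ∈ Dᗮ → u1 ∈ D → u2 ∈ Dᗮ →
      R (Jb (x1+x2)) (Jb (y1+y2)) (z1+z2) (u1+u2) - R (x1+x2) (y1+y2) (z1+z2) (u1+u2)
      = -((2*a+b)/4) * ( ⟪J y1, z1⟫*⟪J x2, u2⟫ + ⟪J y2, z2⟫*⟪J x1, u1⟫
        - ⟪J x1, z1⟫*⟪J y2, u2⟫ - ⟪J x2, z2⟫*⟪J y1, u1⟫
        + ⟪y1,z1⟫*⟪x2,u2⟫ + ⟪y2,z2⟫*⟪x1,u1⟫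
        - ⟪x1,z1⟫*⟪y2,u2⟫ - ⟪x2,z2⟫*⟪y1,u1⟫ ) := by
    intro x1 x2 y1 y2 z1 z2 u1 u2 hx1 hx2 hy1 hy2 hz1 hz2 hu1 hu2
    have hJx1 := hDJ x1 hx1
    have hJy1 := hDJ y1 hy1
    have hJz1 := hDJ z1 hz1
    have hJu1 := hDJ u1 hu1
    have hJx2 := fJE x2 hx2
    have hJy2 := fJE y2 hy2
    have hJz2 := fJE z2 hz2
    have hJu2 := fJE u2 hu2
    have hbx : Jb (x1 + x2) = J x1 - J x2 := by
      rw [map_add, hJbD _ hx1, hJbE _ hx2]; abel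
    have hby : Jb (y1 + y2) = J y1 - J y2 := by
      rw [map_add, hJbD _ hy1, hJbE _ hy2]; abel
    rw [hR, hR, hPp, hPp, hPh, hPh, hPs, hPs]
    simp only [hh, hbx, hby]
    simp only [map_add, map_sub, map_neg, map_zero, hJ2,
      Submodule.coe_add, AddSubgroupClass.coe_sub, NegMemClass.coe_neg, ZeroMemClass.coe_zero,
      pD x1 hx1, pD y1 hy1, pD z1 hz1, pD u1 hu1,
      pD0 x2 hx2, pD0 y2 hy2, pD0 z2 hz2, pD0 u2 hu2,
      pD _ hJx1, pD _ hJy1, pD _ hJz1, pD _ hJu1,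
      pD0 _ hJx2, pD0 _ hJy2, pD0 _ hJz2, pD0 _ hJu2,
      inner_add_left, inner_add_right, inner_sub_left, inner_sub_right,
      inner_neg_left, inner_neg_right, inner_zero_left, inner_zero_right,
      hcross x1 y2 hx1 hy2, hcross x1 z2 hx1 hz2, hcross x1 u2 hx1 hu2,
      hcross y1 z2 hy1 hz2, hcross y1 u2 hy1 hu2, hcross z1 u2 hz1 hu2,
      hcross' x2 y1 hx2 hy1, hcross' x2 z1 hx2 hz1, hcross' x2 u1 hx2 hu1,
      hcross' y2 z1 hy2 hz1, hcross' y2 u1 hy2 hu1, hcross' z2 u1 hz2 hu1,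
      hcross _ y2 hJx1 hy2, hcross _ z2 hJx1 hz2, hcross _ u2 hJx1 hu2,
      hcross _ z2 hJy1 hz2, hcross _ u2 hJy1 hu2, hcross _ u2 hJz1 hu2,
      hcross' _ y1 hJx2 hy1, hcross' _ z1 hJx2 hz1, hcross' _ u1 hJx2 hu1,
      hcross' _ z1 hJy2 hz1, hcross' _ u1 hJy2 hu1, hcross' _ u1 hJz2 hu1,
      fJJ, fswap, gself]
    ring
  constructor
  · intro H
    have hDne : D ≠ ⊥ := by
      intro hbot
      rw [hbot] at hDdim
      simp at hDdim
    obtain ⟨x, hxD, hx0⟩ := Submodule.ne_bot_iff D |>.mp hDne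
    have hE2 : finrank ℝ (Dᗮ : Submodule ℝ V) = 2 := by
      have := Submodule.finrank_add_finrank_orthogonal (K := D)
      omega
    have hEne : (Dᗮ : Submodule ℝ V) ≠ ⊥ := by
      intro hbot
      rw [hbot] at hE2
      simp at hE2
    obtain ⟨ξ, hξD, hξ0⟩ := Submodule.ne_bot_iff _ |>.mp hEne
    have hk := key x 0 0 ξ x 0 0 ξ hxD (Submodule.zero_mem _) (Submodule.zero_mem _) hξD
      hxD (Submodule.zero_mem _) (Submodule.zero_mem _) hξD
    simp only [add_zero, zero_add, map_zero, inner_zero_left, inner_zero_right,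
      mul_zero, zero_mul, gself] at hk
    rw [H x ξ x ξ] at hk
    have h4 : (2*a+b) * (⟪x,x⟫*⟪ξ,ξ⟫) = 0 := by linarith [hk]
    rcases mul_eq_zero.mp h4 with h5 | h5
    · exact h5
    · exact absurd h5 (mul_ne_zero (inner_self_ne_zero.mpr hx0) (inner_self_ne_zero.mpr hξ0))
  · intro hab X Y Z U
    have dec : ∀ W : V, ∃ w1 w2 : V, w1 ∈ D ∧ w2 ∈ Dᗮ ∧ W = w1 + w2 := fun W =>
      ⟨_, _, (Submodule.orthogonalProjectionOnto D W).2, (Submodule.orthogonalProjectionOnto Dᗮ W).2,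
        (Submodule.starProjection_add_starProjection_orthogonal (K := D) W).symm⟩
    obtain ⟨x1, x2, hx1, hx2, hX⟩ := dec X
    obtain ⟨y1, y2, hy1, hy2, hY⟩ := dec Y
    obtain ⟨z1, z2, hz1, hz2, hZ⟩ := dec Z
    obtain ⟨u1, u2, hu1, hu2, hU⟩ := dec U
    subst hX hY hZ hU
    have hk := key x1 x2 y1 y2 z1 z2 u1 u2 hx1 hx2 hy1 hy2 hz1 hz2 hu1 hu2
    rw [hab] at hk
    simp only [neg_zero, zero_div, zero_mul, neg_mul] at hk
    linarith [hk]
end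

section
/- If Φ' and Ψ' denote the tensors Φ and Ψ constructed with respect to the complementary subspace E instead of D, then aΠ + bΦ + cΨ = (a+b+c)Π − (b+2c)Φ' + cΨ' for all real a, b, c. Equivalently, Φ + Φ' = Π and Ψ − Ψ' = Φ − Φ' suitably combined yield this identity. -/
open scoped RealInnerProductSpace
open Module

lemma key_det {V : Type*} [NormedAddCommGroup V] [InnerProductSpace ℝ V] [FiniteDimensional ℝ V]
    (J : V →ₗ[ℝ] V) (hJ2 : ∀ x, J (J x) = -x)
    (hJskew : ∀ x y, ⟪J x, y⟫ = -⟪x, J y⟫)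
    (K : Submodule ℝ V) (hK : finrank ℝ K = 2) (hKJ : ∀ x ∈ K, J x ∈ K) :
    ∀ p ∈ K, ∀ q ∈ K, ∀ r ∈ K, ∀ s ∈ K,
      ⟪p, r⟫ * ⟪q, s⟫ - ⟪p, s⟫ * ⟪q, r⟫ = ⟪J p, q⟫ * ⟪J r, s⟫ := by
  have hKnt : Nontrivial K := Module.nontrivial_of_finrank_pos (R := ℝ) (by rw [hK]; norm_num)
  obtain ⟨⟨e0, he0K⟩, he0ne⟩ := exists_ne (0 : K)
  have he0 : e0 ≠ 0 := by simpa [Subtype.ext_iff] using he0ne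
  obtain ⟨e, heK, hee⟩ : ∃ e ∈ K, ⟪e, e⟫ = (1 : ℝ) := by
    refine ⟨‖e0‖⁻¹ • e0, K.smul_mem _ he0K, ?_⟩
    rw [real_inner_smul_left, real_inner_smul_right, real_inner_self_eq_norm_sq]
    have : ‖e0‖ ≠ 0 := norm_ne_zero_iff.mpr he0
    field_simp
  obtain ⟨f, hf_def⟩ : ∃ f, f = J e := ⟨_, rfl⟩
  have hfK : f ∈ K := hf_def ▸ hKJ e heK
  have hJe : J e = f := hf_def.symm
  have hJf : J f = -e := by rw [hf_def, hJ2]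
  have hef : ⟪e, f⟫ = 0 := by
    have h1 : ⟪J e, e⟫ = -⟪e, J e⟫ := hJskew e e
    have h2 : ⟪J e, e⟫ = ⟪e, J e⟫ := real_inner_comm _ _
    have h3 : ⟪e, J e⟫ = 0 := by linarith
    rw [hf_def]; exact h3
  have hfe : ⟪f, e⟫ = 0 := by rw [real_inner_comm]; exact hef
  have hff : ⟪f, f⟫ = 1 := by
    rw [hf_def, hJskew, hJ2, inner_neg_right, hee]; ring
  have hli : LinearIndependent ℝ ![e, f] := by
    rw [LinearIndependent.pair_iff]
    intro s t hst
    have h1 : ⟪s • e + t • f, e⟫ = 0 := by rw [hst, inner_zero_left]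
    have h2 : ⟪s • e + t • f, f⟫ = 0 := by rw [hst, inner_zero_left]
    rw [inner_add_left, real_inner_smul_left, real_inner_smul_left, hee, hfe] at h1
    rw [inner_add_left, real_inner_smul_left, real_inner_smul_left, hef, hff] at h2
    constructor <;> linarith
  have hspan : Submodule.span ℝ {e, f} = K := by
    apply Submodule.eq_of_le_of_finrank_le
    · rw [Submodule.span_le]
      intro x hx
      rcases hx with rfl | hx
      · exact heK
      · simpa using hx ▸ hfK
    · rw [hK]
      have hcard := finrank_span_eq_card (R := ℝ) hli
      have hrange : Set.range ![e, f] = {e, f} := by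
        simp [Matrix.range_cons, Matrix.range_empty, Set.pair_comm]
      rw [hrange] at hcard
      rw [hcard]
      simp
  have hdecomp : ∀ v ∈ K, v = ⟪v, e⟫ • e + ⟪v, f⟫ • f := by
    intro v hv
    rw [← hspan] at hv
    obtain ⟨x, y, hxy⟩ := Submodule.mem_span_pair.mp hv
    have h1 : ⟪v, e⟫ = x := by
      rw [← hxy, inner_add_left, real_inner_smul_left, real_inner_smul_left, hee, hfe]; ring
    have h2 : ⟪v, f⟫ = y := by
      rw [← hxy, inner_add_left, real_inner_smul_left, real_inner_smul_left, hef, hff]; ring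
    rw [h1, h2, hxy]
  intro p hp q hq r hr s hs
  have hinner : ∀ x1 x2 y1 y2 : ℝ,
      ⟪x1 • e + x2 • f, y1 • e + y2 • f⟫ = x1 * y1 + x2 * y2 := by
    intro x1 x2 y1 y2
    simp only [inner_add_left, inner_add_right, real_inner_smul_left, real_inner_smul_right,
      hee, hff, hef, hfe]
    ring
  have hJv : ∀ x1 x2 : ℝ, J (x1 • e + x2 • f) = (-x2) • e + x1 • f := by
    intro x1 x2
    rw [map_add, map_smul, map_smul, hJe, hJf]
    module
  obtain hp' := hdecomp p hp
  obtain hq' := hdecomp q hq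
  obtain hr' := hdecomp r hr
  obtain hs' := hdecomp s hs
  rw [hp', hq', hr', hs', hJv, hJv, hinner, hinner, hinner, hinner, hinner, hinner]
  ring

lemma key_det' {V : Type*} [NormedAddCommGroup V] [InnerProductSpace ℝ V] [FiniteDimensional ℝ V]
    (J : V →ₗ[ℝ] V) (hJ2 : ∀ x, J (J x) = -x)
    (hJskew : ∀ x y, ⟪J x, y⟫ = -⟪x, J y⟫)
    (K : Submodule ℝ V) (hK : finrank ℝ K = 2) (hKJ : ∀ x ∈ K, J x ∈ K) :
    ∀ p ∈ K, ∀ q ∈ K, ∀ r ∈ K, ∀ s ∈ K,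
      ⟪J p, r⟫ * ⟪J q, s⟫ - ⟪J p, s⟫ * ⟪J q, r⟫ = ⟪J p, q⟫ * ⟪J r, s⟫ := by
  intro p hp q hq r hr s hs
  have h1 := key_det J hJ2 hJskew K hK hKJ (J p) (hKJ p hp) (J q) (hKJ q hq) r hr s hs
  have h2 : ⟪J (J p), J q⟫ = ⟪J p, q⟫ := by
    rw [hJ2, inner_neg_left, hJskew]
  rw [h2] at h1
  exact h1

theorem stmt10 {V : Type*} [NormedAddCommGroup V] [InnerProductSpace ℝ V] [FiniteDimensional ℝ V] (hV : finrank ℝ V = 4)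
    (J : V →ₗ[ℝ] V) (hJ2 : ∀ x, J (J x) = -x)
    (hJskew : ∀ x y, ⟪J x, y⟫ = -⟪x, J y⟫)
    (D : Submodule ℝ V) (hDdim : finrank ℝ D = 2)
    (hDJ : ∀ x ∈ D, J x ∈ D)
    (h : V → V → ℝ)
    (hh : ∀ x y, h x y = ⟪(Submodule.orthogonalProjection D x : V), (Submodule.orthogonalProjection D y : V)⟫)
    (m : V → V → ℝ)
    (hm : ∀ x y, m x y = ⟪(Submodule.orthogonalProjection Dᗮ x : V), (Submodule.orthogonalProjection Dᗮ y : V)⟫)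
    (Pp : V → V → V → V → ℝ)
    (hPp : ∀ X Y Z U, Pp X Y Z U = (1/4) * (⟪Y, Z⟫ * ⟪X, U⟫ - ⟪X, Z⟫ * ⟪Y, U⟫
      + ⟪J Y, Z⟫ * ⟪J X, U⟫ - ⟪J X, Z⟫ * ⟪J Y, U⟫ - 2 * ⟪J X, Y⟫ * ⟪J Z, U⟫))
    (Ph : V → V → V → V → ℝ)
    (hPh : ∀ X Y Z U, Ph X Y Z U = (1/8) * (⟪Y, Z⟫ * h X U - ⟪X, Z⟫ * h Y U
      + ⟪X, U⟫ * h Y Z - ⟪Y, U⟫ * h X Z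
      + ⟪J Y, Z⟫ * h (J X) U - ⟪J X, Z⟫ * h (J Y) U
      + ⟪J X, U⟫ * h (J Y) Z - ⟪J Y, U⟫ * h (J X) Z
      - 2 * ⟪J X, Y⟫ * h (J Z) U - 2 * ⟪J Z, U⟫ * h (J X) Y))
    (Ps : V → V → V → V → ℝ)
    (hPs : ∀ X Y Z U, Ps X Y Z U = -(h (J X) Y * h (J Z) U))
    (Ph' : V → V → V → V → ℝ)
    (hPh' : ∀ X Y Z U, Ph' X Y Z U = (1/8) * (⟪Y, Z⟫ * m X U - ⟪X, Z⟫ * m Y U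
      + ⟪X, U⟫ * m Y Z - ⟪Y, U⟫ * m X Z
      + ⟪J Y, Z⟫ * m (J X) U - ⟪J X, Z⟫ * m (J Y) U
      + ⟪J X, U⟫ * m (J Y) Z - ⟪J Y, U⟫ * m (J X) Z
      - 2 * ⟪J X, Y⟫ * m (J Z) U - 2 * ⟪J Z, U⟫ * m (J X) Y))
    (Ps' : V → V → V → V → ℝ)
    (hPs' : ∀ X Y Z U, Ps' X Y Z U = -(m (J X) Y * m (J Z) U))
    (a b c : ℝ) :
    ∀ X Y Z U : V,
      a * Pp X Y Z U + b * Ph X Y Z U + c * Ps X Y Z U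
        = (a + b + c) * Pp X Y Z U - (b + 2 * c) * Ph' X Y Z U + c * Ps' X Y Z U := by
  have hPmem : ∀ u : V, ((Submodule.orthogonalProjection D u : V)) ∈ D := fun u => (Submodule.orthogonalProjection D u).2
  have hPJ : ∀ u : V, ((Submodule.orthogonalProjection D (J u) : V)) = J (Submodule.orthogonalProjection D u : V) := by
    intro u
    show D.starProjection (J u) = J (D.starProjection u)
    apply Submodule.eq_starProjection_of_mem_of_inner_eq_zero (hDJ _ (hPmem u))
    intro w hw
    rw [← map_sub, hJskew]
    rw [show ⟪u - (Submodule.orthogonalProjection D u : V), J w⟫ = 0 from Submodule.starProjection_inner_eq_zero (K := D) u (J w) (hDJ w hw)]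
    ring
  have hQval : ∀ u : V, ((Submodule.orthogonalProjection Dᗮ u : V)) = u - (Submodule.orthogonalProjection D u : V) :=
    fun u => Submodule.starProjection_orthogonal_val (K := D) u
  have hQmem : ∀ u : V, ((Submodule.orthogonalProjection Dᗮ u : V)) ∈ Dᗮ := fun u => (Submodule.orthogonalProjection Dᗮ u).2
  have hQJ : ∀ u : V, ((Submodule.orthogonalProjection Dᗮ (J u) : V)) = J (Submodule.orthogonalProjection Dᗮ u : V) := by
    intro u
    rw [hQval, hQval, hPJ, map_sub]
  have hDorthJ : ∀ x ∈ Dᗮ, J x ∈ Dᗮ := by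
    intro x hx
    rw [Submodule.mem_orthogonal]
    intro u hu
    have h1 : ⟪J u, x⟫ = 0 := (Submodule.mem_orthogonal D x).1 hx (J u) (hDJ u hu)
    have h2 : ⟪J u, x⟫ = -⟪u, J x⟫ := hJskew u x
    linarith
  have hDorthdim : finrank ℝ Dᗮ = 2 := by
    have := Submodule.finrank_add_finrank_orthogonal (K := D)
    omega
  have hg : ∀ x y : V, ⟪x, y⟫ = h x y + m x y := by
    intro x y
    rw [hh, hm, hQval, hQval]
    have h1 : ⟪(Submodule.orthogonalProjection D x : V), y - (Submodule.orthogonalProjection D y : V)⟫ = 0 := by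
      have := Submodule.sub_starProjection_mem_orthogonal (K := D) y
      exact (Submodule.mem_orthogonal D _).1 this _ (hPmem x)
    have h2 : ⟪x - (Submodule.orthogonalProjection D x : V), (Submodule.orthogonalProjection D y : V)⟫ = 0 :=
      Submodule.starProjection_inner_eq_zero (K := D) x _ (hPmem y)
    simp only [inner_sub_left, inner_sub_right] at h1 h2 ⊢
    linarith
  intro X Y Z U
  have Hh1 : h X Z * h Y U - h X U * h Y Z = h (J X) Y * h (J Z) U := by
    simp only [hh, hPJ]
    exact key_det J hJ2 hJskew D hDdim hDJ _ (hPmem X) _ (hPmem Y) _ (hPmem Z) _ (hPmem U)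
  have Hh2 : h (J X) Z * h (J Y) U - h (J X) U * h (J Y) Z = h (J X) Y * h (J Z) U := by
    simp only [hh, hPJ]
    exact key_det' J hJ2 hJskew D hDdim hDJ _ (hPmem X) _ (hPmem Y) _ (hPmem Z) _ (hPmem U)
  have Hm1 : m X Z * m Y U - m X U * m Y Z = m (J X) Y * m (J Z) U := by
    simp only [hm, hQJ]
    exact key_det J hJ2 hJskew Dᗮ hDorthdim hDorthJ _ (hQmem X) _ (hQmem Y) _ (hQmem Z) _ (hQmem U)
  have Hm2 : m (J X) Z * m (J Y) U - m (J X) U * m (J Y) Z = m (J X) Y * m (J Z) U := by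
    simp only [hm, hQJ]
    exact key_det' J hJ2 hJskew Dᗮ hDorthdim hDorthJ _ (hQmem X) _ (hQmem Y) _ (hQmem Z) _ (hQmem U)
  rw [hPp, hPh, hPs, hPh', hPs']
  simp only [hg]
  linear_combination (c/4) * Hh1 + (c/4) * Hh2 - (c/4) * Hm1 - (c/4) * Hm2
end

section
/- If the Ricci tensor of R = aΠ + bΦ + cΨ is computed by contraction, its eigenvalues on E and D are λ = (3/2)a + b/4 and μ = (3/2)a + (5/4)b + c respectively; that is, Ric(X,Y) = λ·m(X,Y) + μ·h(X,Y), where Ric(X,Y) = Σᵢ R(eᵢ, X, Y, eᵢ) over an orthonormal basis (eᵢ) of V. -/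
open scoped RealInnerProductSpace
open Module

theorem stmt13 {V : Type*} [NormedAddCommGroup V] [InnerProductSpace ℝ V] [FiniteDimensional ℝ V] (hV : finrank ℝ V = 4)
    (J : V →ₗ[ℝ] V) (hJ2 : ∀ x, J (J x) = -x)
    (hJskew : ∀ x y, ⟪J x, y⟫ = -⟪x, J y⟫)
    (D : Submodule ℝ V) (hDdim : finrank ℝ D = 2)
    (hDJ : ∀ x ∈ D, J x ∈ D)
    (h : V → V → ℝ)
    (hh : ∀ x y, h x y = ⟪(D.orthogonalProjection x : V), (D.orthogonalProjection y : V)⟫)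
    (m : V → V → ℝ)
    (hm : ∀ x y, m x y = ⟪(Dᗮ.orthogonalProjection x : V), (Dᗮ.orthogonalProjection y : V)⟫)
    (Pp : V → V → V → V → ℝ)
    (hPp : ∀ X Y Z U, Pp X Y Z U = (1/4) * (⟪Y, Z⟫ * ⟪X, U⟫ - ⟪X, Z⟫ * ⟪Y, U⟫
      + ⟪J Y, Z⟫ * ⟪J X, U⟫ - ⟪J X, Z⟫ * ⟪J Y, U⟫ - 2 * ⟪J X, Y⟫ * ⟪J Z, U⟫))
    (Ph : V → V → V → V → ℝ)
    (hPh : ∀ X Y Z U, Ph X Y Z U = (1/8) * (⟪Y, Z⟫ * h X U - ⟪X, Z⟫ * h Y U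
      + ⟪X, U⟫ * h Y Z - ⟪Y, U⟫ * h X Z
      + ⟪J Y, Z⟫ * h (J X) U - ⟪J X, Z⟫ * h (J Y) U
      + ⟪J X, U⟫ * h (J Y) Z - ⟪J Y, U⟫ * h (J X) Z
      - 2 * ⟪J X, Y⟫ * h (J Z) U - 2 * ⟪J Z, U⟫ * h (J X) Y))
    (Ps : V → V → V → V → ℝ)
    (hPs : ∀ X Y Z U, Ps X Y Z U = -(h (J X) Y * h (J Z) U))
    (a b c : ℝ) (R : V → V → V → V → ℝ)
    (hR : ∀ X Y Z U, R X Y Z U = a * Pp X Y Z U + b * Ph X Y Z U + c * Ps X Y Z U)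
    (e : OrthonormalBasis (Fin 4) ℝ V) :
    ∀ X Y : V, ∑ i, R (e i) X Y (e i)
      = ((3/2) * a + b / 4) * m X Y + ((3/2) * a + (5/4) * b + c) * h X Y := by
  intro X Y
  simp only [Submodule.orthogonalProjection] at hh hm
  -- basic facts about the projection
  have hPsa : ∀ x y : V, ⟪(D.orthogonalProjectionOnto x : V), y⟫ = ⟪x, (D.orthogonalProjectionOnto y : V)⟫ :=
    fun x y => D.inner_starProjection_left_eq_right x y
  have hPP : ∀ x : V,
      ((D.orthogonalProjectionOnto ((D.orthogonalProjectionOnto x : V)) : D) : V) = (D.orthogonalProjectionOnto x : V) := by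
    intro x
    rw [Submodule.orthogonalProjectionOnto_mem_subspace_eq_self]
  have hhg : ∀ x y : V, h x y = ⟪(D.orthogonalProjectionOnto x : V), y⟫ := by
    intro x y
    rw [hh, hPsa, hPP, ← hPsa]
  have hsymm : ∀ x y : V, h x y = h y x := by
    intro x y
    rw [hhg, hPsa, real_inner_comm, ← hhg]
  have hright : ∀ x y : V, h x y = ⟪(D.orthogonalProjectionOnto y : V), x⟫ := by
    intro x y
    rw [hhg, hPsa, real_inner_comm]
  have skw : ∀ u v : V, ⟪J u, v⟫ = -⟪J v, u⟫ := by
    intro u v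
    rw [hJskew, real_inner_comm]
  have innJJ : ∀ u v : V, ⟪J u, J v⟫ = ⟪u, v⟫ := by
    intro u v
    rw [hJskew, hJ2, inner_neg_right, neg_neg]
  -- J commutes with the projection
  have hPJ : ∀ x : V, ((D.orthogonalProjectionOnto (J x) : D) : V) = J (D.orthogonalProjectionOnto x : V) := by
    intro x
    apply Submodule.eq_starProjection_of_mem_orthogonal
    · exact hDJ _ (D.orthogonalProjectionOnto x).2
    · have h1 : x - (D.orthogonalProjectionOnto x : V) ∈ Dᗮ := Submodule.sub_starProjection_mem_orthogonal x
      have h2 : J x - J (D.orthogonalProjectionOnto x : V) = J (x - (D.orthogonalProjectionOnto x : V)) :=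
        (map_sub J _ _).symm
      rw [h2, Submodule.mem_orthogonal]
      intro u hu
      have h3 : ⟪J u, x - (D.orthogonalProjectionOnto x : V)⟫ = 0 :=
        (Submodule.mem_orthogonal D _).mp h1 (J u) (hDJ u hu)
      have h4 := hJskew u (x - (D.orthogonalProjectionOnto x : V))
      rw [h3] at h4
      linarith
  have hJright : ∀ u v : V, h (J u) v = ⟪J (D.orthogonalProjectionOnto u : V), v⟫ := by
    intro u v
    rw [hhg, hPJ]
  have hcl : ∀ u v : V, h (J u) v = -⟪J (D.orthogonalProjectionOnto v : V), u⟫ := by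
    intro u v
    rw [hJright, hJskew, hPsa, hPJ, real_inner_comm]
  have hmg : ∀ x y : V, m x y = ⟪x, y⟫ - h x y := by
    intro x y
    rw [hm, ← Submodule.starProjection_apply, ← Submodule.starProjection_apply,
      Submodule.starProjection_orthogonal_val, Submodule.starProjection_orthogonal_val,
      Submodule.starProjection_apply, Submodule.starProjection_apply,
      inner_sub_left, inner_sub_right, inner_sub_right, ← hh, ← hPsa, ← hhg]
    ring
  -- Parseval-type summation identities
  have par : ∀ u v : V, (∑ i, ⟪u, e i⟫ * ⟪v, e i⟫) = ⟪u, v⟫ := by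
    intro u v
    rw [← e.sum_inner_mul_inner u v]
    exact Finset.sum_congr rfl fun i _ => by rw [real_inner_comm v (e i)]
  have sEE : (∑ i, ⟪e i, e i⟫) = 4 := by
    have h1 : ∀ i : Fin 4, ⟪e i, e i⟫ = 1 := by
      intro i
      rw [real_inner_self_eq_norm_sq, e.orthonormal.1 i, one_pow]
    rw [Finset.sum_congr rfl fun i _ => h1 i]
    norm_num
  have sJE : (∑ i, ⟪J (e i), e i⟫) = 0 := by
    have h1 : ∀ u : V, ⟪J u, u⟫ = 0 := by
      intro u
      have := skw u u
      linarith
    rw [Finset.sum_congr rfl fun i _ => h1 (e i)]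
    simp
  have sPJE : (∑ i, ⟪(D.orthogonalProjectionOnto (J (e i)) : V), e i⟫) = 0 := by
    have h1 : ∀ u : V, ⟪(D.orthogonalProjectionOnto (J u) : V), u⟫ = 0 := by
      intro u
      have key : ⟪(D.orthogonalProjectionOnto (J u) : V), u⟫
          = -⟪(D.orthogonalProjectionOnto (J u) : V), u⟫ := by
        calc ⟪(D.orthogonalProjectionOnto (J u) : V), u⟫
            = ⟪J (D.orthogonalProjectionOnto u : V), u⟫ := by rw [hPJ]
          _ = -⟪(D.orthogonalProjectionOnto u : V), J u⟫ := hJskew _ _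
          _ = -⟪u, (D.orthogonalProjectionOnto (J u) : V)⟫ := by rw [hPsa]
          _ = -⟪(D.orthogonalProjectionOnto (J u) : V), u⟫ := by rw [real_inner_comm]
      linarith
    rw [Finset.sum_congr rfl fun i _ => h1 (e i)]
    simp
  -- the trace of the projection is 2
  have sPE : (∑ i, ⟪(D.orthogonalProjectionOnto (e i) : V), e i⟫) = 2 := by
    let f : OrthonormalBasis (Fin 2) ℝ D := (stdOrthonormalBasis ℝ D).reindex (finCongr hDdim)
    have hexp : ∀ x : V, (D.orthogonalProjectionOnto x : V)
        = ∑ j : Fin 2, ⟪((f j : D) : V), x⟫ • ((f j : D) : V) := by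
      intro x
      rw [f.orthogonalProjectionOnto_apply_eq_sum x]
      push_cast
      rfl
    calc (∑ i, ⟪(D.orthogonalProjectionOnto (e i) : V), e i⟫)
        = ∑ i, ∑ j : Fin 2, ⟪((f j : D) : V), e i⟫ * ⟪((f j : D) : V), e i⟫ := by
          refine Finset.sum_congr rfl fun i _ => ?_
          rw [hexp (e i), sum_inner]
          refine Finset.sum_congr rfl fun j _ => ?_
          rw [real_inner_smul_left]
      _ = ∑ j : Fin 2, ⟪((f j : D) : V), ((f j : D) : V)⟫ := by
          rw [Finset.sum_comm]
          exact Finset.sum_congr rfl fun j _ => par _ _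
      _ = 2 := by
          have h1 : ∀ j : Fin 2, ⟪((f j : D) : V), ((f j : D) : V)⟫ = (1 : ℝ) := by
            intro j
            rw [real_inner_self_eq_norm_sq]
            have : ‖((f j : D) : V)‖ = ‖f j‖ := rfl
            rw [this, f.orthonormal.1 j, one_pow]
          rw [Finset.sum_congr rfl fun j _ => h1 j]
          norm_num
  -- the three contractions
  have SPp : (∑ i, Pp (e i) X Y (e i)) = (3/2) * ⟪X, Y⟫ := by
    have step : ∀ i : Fin 4, Pp (e i) X Y (e i) =
        (1/4) * ⟪X, Y⟫ * ⟪e i, e i⟫ - (1/4) * (⟪Y, e i⟫ * ⟪X, e i⟫)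
          + (1/4) * ⟪J X, Y⟫ * ⟪J (e i), e i⟫ + (1/4) * (⟪J Y, e i⟫ * ⟪J X, e i⟫)
          + (1/2) * (⟪J X, e i⟫ * ⟪J Y, e i⟫) := by
      intro i
      rw [hPp, real_inner_comm (e i) Y, skw (e i) Y, skw (e i) X]
      ring
    rw [Finset.sum_congr rfl fun i _ => step i, Finset.sum_add_distrib, Finset.sum_add_distrib,
      Finset.sum_add_distrib, Finset.sum_sub_distrib, ← Finset.mul_sum, ← Finset.mul_sum,
      ← Finset.mul_sum, ← Finset.mul_sum, ← Finset.mul_sum, sEE, sJE, par Y X,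
      par (J Y) (J X), par (J X) (J Y), innJJ, innJJ, real_inner_comm Y X]
    ring
  have SPh : (∑ i, Ph (e i) X Y (e i)) = (1/4) * ⟪X, Y⟫ + h X Y := by
    have step : ∀ i : Fin 4, Ph (e i) X Y (e i) =
        (1/8) * ⟪X, Y⟫ * ⟪(D.orthogonalProjectionOnto (e i) : V), e i⟫
          - (1/8) * (⟪Y, e i⟫ * ⟪(D.orthogonalProjectionOnto X : V), e i⟫)
          + (1/8) * ⟪(D.orthogonalProjectionOnto X : V), Y⟫ * ⟪e i, e i⟫
          - (1/8) * (⟪X, e i⟫ * ⟪(D.orthogonalProjectionOnto Y : V), e i⟫)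
          + (1/8) * ⟪J X, Y⟫ * ⟪(D.orthogonalProjectionOnto (J (e i)) : V), e i⟫
          + (1/8) * (⟪J Y, e i⟫ * ⟪J (D.orthogonalProjectionOnto X : V), e i⟫)
          + (1/8) * ⟪J (D.orthogonalProjectionOnto X : V), Y⟫ * ⟪J (e i), e i⟫
          + (1/8) * (⟪J X, e i⟫ * ⟪J (D.orthogonalProjectionOnto Y : V), e i⟫)
          + (1/4) * (⟪J X, e i⟫ * ⟪J (D.orthogonalProjectionOnto Y : V), e i⟫)
          + (1/4) * (⟪J Y, e i⟫ * ⟪J (D.orthogonalProjectionOnto X : V), e i⟫) := by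
      intro i
      rw [hPh, hcl (e i) Y, hcl (e i) X, hJright X (e i), hJright X Y, hJright Y (e i),
        hright (e i) Y, hhg (J (e i)) (e i), hhg (e i) (e i), hhg X (e i), hhg X Y,
        real_inner_comm (e i) Y, skw (e i) Y, skw (e i) X]
      ring
    rw [Finset.sum_congr rfl fun i _ => step i]
    simp only [Finset.sum_add_distrib, Finset.sum_sub_distrib, ← Finset.mul_sum]
    rw [sPE, sEE, sJE, sPJE, par Y (D.orthogonalProjectionOnto X : V),
      par X (D.orthogonalProjectionOnto Y : V),
      par (J Y) (J (D.orthogonalProjectionOnto X : V)),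
      par (J X) (J (D.orthogonalProjectionOnto Y : V)), innJJ, innJJ,
      ← hPsa X Y, real_inner_comm (D.orthogonalProjectionOnto X : V) Y, hhg X Y]
    ring
  have SPs : (∑ i, Ps (e i) X Y (e i)) = h X Y := by
    have step : ∀ i : Fin 4, Ps (e i) X Y (e i) =
        ⟪J (D.orthogonalProjectionOnto X : V), e i⟫ * ⟪J (D.orthogonalProjectionOnto Y : V), e i⟫ := by
      intro i
      rw [hPs, hcl (e i) X, hJright Y (e i)]
      ring
    rw [Finset.sum_congr rfl fun i _ => step i,
      par (J (D.orthogonalProjectionOnto X : V)) (J (D.orthogonalProjectionOnto Y : V)), innJJ, ← hh]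
  -- assemble
  calc (∑ i, R (e i) X Y (e i))
      = ∑ i, (a * Pp (e i) X Y (e i) + b * Ph (e i) X Y (e i) + c * Ps (e i) X Y (e i)) :=
        Finset.sum_congr rfl fun i _ => hR _ _ _ _
    _ = ((3/2) * a + b / 4) * m X Y + ((3/2) * a + (5/4) * b + c) * h X Y := by
        rw [Finset.sum_add_distrib, Finset.sum_add_distrib, ← Finset.mul_sum, ← Finset.mul_sum,
          ← Finset.mul_sum, SPp, SPh, SPs, hmg X Y]
        ring
end

section
/- The tensor K = (1/6)Π − Φ + Ψ has vanishing Ricci contraction: c(K)(X,Y) = Σᵢ K(eᵢ, X, Y, eᵢ) = 0 for every orthonormal basis (eᵢ) of V and all X, Y. -/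
open scoped RealInnerProductSpace
open Module

theorem stmt14 {V : Type*} [NormedAddCommGroup V] [InnerProductSpace ℝ V] [FiniteDimensional ℝ V] (hV : finrank ℝ V = 4)
    (J : V →ₗ[ℝ] V) (hJ2 : ∀ x, J (J x) = -x)
    (hJskew : ∀ x y, ⟪J x, y⟫ = -⟪x, J y⟫)
    (D : Submodule ℝ V) (hDdim : finrank ℝ D = 2)
    (hDJ : ∀ x ∈ D, J x ∈ D)
    (h : V → V → ℝ)
    (hh : ∀ x y, h x y = ⟪(Submodule.orthogonalProjection D x : V), (Submodule.orthogonalProjection D y : V)⟫)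
    (Pp : V → V → V → V → ℝ)
    (hPp : ∀ X Y Z U, Pp X Y Z U = (1/4) * (⟪Y, Z⟫ * ⟪X, U⟫ - ⟪X, Z⟫ * ⟪Y, U⟫
      + ⟪J Y, Z⟫ * ⟪J X, U⟫ - ⟪J X, Z⟫ * ⟪J Y, U⟫ - 2 * ⟪J X, Y⟫ * ⟪J Z, U⟫))
    (Ph : V → V → V → V → ℝ)
    (hPh : ∀ X Y Z U, Ph X Y Z U = (1/8) * (⟪Y, Z⟫ * h X U - ⟪X, Z⟫ * h Y U
      + ⟪X, U⟫ * h Y Z - ⟪Y, U⟫ * h X Z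
      + ⟪J Y, Z⟫ * h (J X) U - ⟪J X, Z⟫ * h (J Y) U
      + ⟪J X, U⟫ * h (J Y) Z - ⟪J Y, U⟫ * h (J X) Z
      - 2 * ⟪J X, Y⟫ * h (J Z) U - 2 * ⟪J Z, U⟫ * h (J X) Y))
    (Ps : V → V → V → V → ℝ)
    (hPs : ∀ X Y Z U, Ps X Y Z U = -(h (J X) Y * h (J Z) U))
    (K : V → V → V → V → ℝ)
    (hK : ∀ X Y Z U, K X Y Z U = (1/6) * Pp X Y Z U - Ph X Y Z U + Ps X Y Z U) :
    ∀ (e : OrthonormalBasis (Fin 4) ℝ V) (X Y : V),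
      ∑ i, K (e i) X Y (e i) = 0 := by
  intro e X Y
  classical
  set P : V → V := fun x => (Submodule.orthogonalProjection D x : V) with hPdef
  have hPmem : ∀ x, P x ∈ D := fun x => SetLike.coe_mem _
  have hPself : ∀ x, x ∈ D → P x = x := fun x hx =>
    Submodule.eq_starProjection_of_mem_of_inner_eq_zero hx (by simp)
  have hPsym : ∀ x y, ⟪P x, y⟫ = ⟪x, P y⟫ := fun x y =>
    Submodule.inner_starProjection_left_eq_right D x y
  have hPidem : ∀ x, P (P x) = P x := fun x => hPself _ (hPmem x)
  have hh' : ∀ x y, h x y = ⟪x, P y⟫ := by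
    intro x y
    rw [hh]
    show ⟪P x, P y⟫ = ⟪x, P y⟫
    rw [hPsym, hPidem]
  have hJJ : ∀ x y, ⟪J x, J y⟫ = ⟪x, y⟫ := by
    intro x y
    rw [hJskew, hJ2, inner_neg_right, neg_neg]
  have hPJ : ∀ x, P (J x) = J (P x) := by
    intro x
    apply Submodule.eq_starProjection_of_mem_of_inner_eq_zero (hDJ _ (hPmem x))
    intro w hw
    have h1 : J x - J (P x) = J (x - P x) := by rw [map_sub]
    have h2 : x - P x ∈ Dᗮ := Submodule.sub_starProjection_mem_orthogonal x
    rw [h1, hJskew, (Submodule.mem_orthogonal' D _).1 h2 _ (hDJ w hw), neg_zero]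
  -- diagonal skew terms vanish
  have hdJ : ∀ w : V, ⟪J w, w⟫ = 0 := by
    intro w
    have h1 := hJskew w w
    have h2 := real_inner_comm (J w) w
    linarith
  have hdJP : ∀ w : V, ⟪J w, P w⟫ = 0 := by
    intro w
    have h1 : ⟪J w, P w⟫ = ⟪w, J (P w)⟫ := by
      rw [← hPJ, ← hPsym, real_inner_comm]
    have h2 : ⟪J w, P w⟫ = -⟪w, J (P w)⟫ := hJskew w (P w)
    linarith
  -- key pointwise normalization
  have key : ∀ w : V, K w X Y w =
      (1/24) * ⟪X,Y⟫ * ⟪w,w⟫ - (1/24) * (⟪w,Y⟫ * ⟪w,X⟫) + (1/8) * (⟪w,J X⟫ * ⟪w,J Y⟫)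
      - (1/8) * ⟪X,Y⟫ * ⟪w,P w⟫ + (1/8) * (⟪w,Y⟫ * ⟪w,P X⟫)
      - (1/8) * ⟪X,P Y⟫ * ⟪w,w⟫ + (1/8) * (⟪w,X⟫ * ⟪w,P Y⟫)
      - (3/8) * (⟪w,J Y⟫ * ⟪w,J (P X)⟫) - (3/8) * (⟪w,J X⟫ * ⟪w,J (P Y)⟫)
      + ⟪w,J (P X)⟫ * ⟪w,J (P Y)⟫ := by
    intro w
    have r1 : ⟪X, w⟫ = ⟪w, X⟫ := real_inner_comm _ _
    have r2 : (⟪J X, Y⟫ : ℝ) = -⟪X, J Y⟫ := hJskew X Y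
    have r3 : ⟪J w, w⟫ = (0:ℝ) := hdJ w
    have r4 : ⟪J w, Y⟫ = -⟪w, J Y⟫ := hJskew w Y
    have r5 : ⟪J X, w⟫ = ⟪w, J X⟫ := real_inner_comm _ _
    have r6 : ⟪J w, X⟫ = -⟪w, J X⟫ := hJskew w X
    have r7 : ⟪J Y, w⟫ = ⟪w, J Y⟫ := real_inner_comm _ _
    have r8 : ⟪J w, P w⟫ = (0:ℝ) := hdJP w
    have r9 : ⟪J X, P w⟫ = ⟪w, J (P X)⟫ := by
      rw [← hPsym, hPJ]; exact real_inner_comm _ _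
    have r10 : ⟪J X, P Y⟫ = -⟪X, J (P Y)⟫ := hJskew X (P Y)
    have r11 : ⟪J w, P Y⟫ = -⟪w, J (P Y)⟫ := hJskew w (P Y)
    have r12 : ⟪J Y, P w⟫ = ⟪w, J (P Y)⟫ := by
      rw [← hPsym, hPJ]; exact real_inner_comm _ _
    have r13 : ⟪J w, P X⟫ = -⟪w, J (P X)⟫ := hJskew w (P X)
    have r14 : ⟪X, P w⟫ = ⟪w, P X⟫ := by rw [← hPsym, real_inner_comm]
    rw [hK, hPp, hPh, hPs]
    simp only [hh']
    rw [r1, r2, r3, r4, r5, r6, r7, r8, r9, r10, r11, r12, r13, r14]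
    ring
  -- the diagonal sums
  have hsum_self : ∑ i, ⟪e i, e i⟫ = (4:ℝ) := by
    have : ∀ i : Fin 4, ⟪e i, e i⟫ = (1:ℝ) := by
      intro i
      rw [real_inner_self_eq_norm_sq, e.orthonormal.1 i]
      norm_num
    simp [this]
  have hsum_P : ∑ i, ⟪e i, P (e i)⟫ = (2:ℝ) := by
    set f := stdOrthonormalBasis ℝ D with hf
    have step : ∀ i : Fin 4, ⟪e i, P (e i)⟫ = ∑ j, ⟪e i, (f j : V)⟫ * ⟪(f j : V), e i⟫ := by
      intro i
      have par := f.sum_inner_mul_inner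
        (⟨P (e i), hPmem (e i)⟩ : D) (⟨P (e i), hPmem (e i)⟩ : D)
      have lhs1 : (⟪(⟨P (e i), hPmem (e i)⟩ : D), (⟨P (e i), hPmem (e i)⟩ : D)⟫ : ℝ)
          = ⟪e i, P (e i)⟫ := by
        rw [Submodule.coe_inner]
        show ⟪P (e i), P (e i)⟫ = _
        rw [hPsym, hPidem]
      have term : ∀ j, (⟪(⟨P (e i), hPmem (e i)⟩ : D), f j⟫ : ℝ) * ⟪f j, (⟨P (e i), hPmem (e i)⟩ : D)⟫
          = ⟪e i, (f j : V)⟫ * ⟪(f j : V), e i⟫ := by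
        intro j
        rw [Submodule.coe_inner, Submodule.coe_inner]
        show (⟪P (e i), (f j : V)⟫ : ℝ) * ⟪(f j : V), P (e i)⟫ = _
        rw [hPsym, hPself _ (SetLike.coe_mem (f j)), ← hPsym, hPself _ (SetLike.coe_mem (f j))]
      calc ⟪e i, P (e i)⟫ = ∑ j, (⟪(⟨P (e i), hPmem (e i)⟩ : D), f j⟫ : ℝ) * ⟪f j, (⟨P (e i), hPmem (e i)⟩ : D)⟫ := by
            rw [par, lhs1]
        _ = ∑ j, ⟪e i, (f j : V)⟫ * ⟪(f j : V), e i⟫ := Finset.sum_congr rfl fun j _ => term j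
    rw [Finset.sum_congr rfl fun i _ => step i, Finset.sum_comm]
    have inner_f : ∀ j, ∑ i, ⟪e i, (f j : V)⟫ * ⟪(f j : V), e i⟫ = (1:ℝ) := by
      intro j
      have : ∑ i, (⟪(f j : V), e i⟫ : ℝ) * ⟪e i, (f j : V)⟫ = ⟪(f j : V), (f j : V)⟫ :=
        e.sum_inner_mul_inner _ _
      have hn : (⟪(f j : V), (f j : V)⟫ : ℝ) = 1 := by
        rw [real_inner_self_eq_norm_sq]
        have := f.orthonormal.1 j
        rw [show ‖(f j : V)‖ = ‖f j‖ from rfl, this]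
        norm_num
      calc ∑ i, ⟪e i, (f j : V)⟫ * ⟪(f j : V), e i⟫
          = ∑ i, (⟪(f j : V), e i⟫ : ℝ) * ⟪e i, (f j : V)⟫ :=
            Finset.sum_congr rfl fun i _ => by ring
        _ = 1 := by rw [this, hn]
    rw [Finset.sum_congr rfl fun j _ => inner_f j]
    simp [hDdim]
  -- Parseval with basis vector on the left of both factors
  have hpar : ∀ a b : V, ∑ i, ⟪e i, a⟫ * ⟪e i, b⟫ = ⟪a, b⟫ := by
    intro a b
    rw [← e.sum_inner_mul_inner a b]
    exact Finset.sum_congr rfl fun i _ => by rw [real_inner_comm a (e i)]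
  rw [Finset.sum_congr rfl fun i _ => key (e i)]
  simp only [Finset.sum_add_distrib, Finset.sum_sub_distrib, ← Finset.mul_sum]
  rw [hsum_self, hsum_P, hpar Y X, hpar (J X) (J Y), hpar Y (P X), hpar X (P Y),
    hpar (J Y) (J (P X)), hpar (J X) (J (P Y)), hpar (J (P X)) (J (P Y))]
  have e1 : ⟪Y, X⟫ = ⟪X, Y⟫ := real_inner_comm _ _
  have e2 : ⟪J X, J Y⟫ = ⟪X, Y⟫ := hJJ X Y
  have e3 : ⟪Y, P X⟫ = ⟪X, P Y⟫ := by rw [← hPsym, real_inner_comm]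
  have e4 : ⟪J Y, J (P X)⟫ = ⟪X, P Y⟫ := by rw [hJJ, e3]
  have e5 : ⟪J X, J (P Y)⟫ = ⟪X, P Y⟫ := hJJ X (P Y)
  have e6 : ⟪J (P X), J (P Y)⟫ = ⟪X, P Y⟫ := by
    rw [hJJ, hPsym, hPidem]
  rw [e1, e2, e3, e4, e5, e6]
  ring
end

section
/- The tensor K = (1/6)Π − Φ + Ψ satisfies the first Bianchi identity: K(X,Y,Z,U) + K(Y,Z,X,U) + K(Z,X,Y,U) = 0 for all X,Y,Z,U. -/
open scoped RealInnerProductSpace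
open Module

theorem stmt15 {V : Type*} [NormedAddCommGroup V] [InnerProductSpace ℝ V] [FiniteDimensional ℝ V] (hV : finrank ℝ V = 4)
    (J : V →ₗ[ℝ] V) (hJ2 : ∀ x, J (J x) = -x)
    (hJskew : ∀ x y, ⟪J x, y⟫ = -⟪x, J y⟫)
    (D : Submodule ℝ V) (hDdim : finrank ℝ D = 2)
    (hDJ : ∀ x ∈ D, J x ∈ D)
    (h : V → V → ℝ)
    (hh : ∀ x y, h x y = ⟪(D.orthogonalProjection x : V), (D.orthogonalProjection y : V)⟫)
    (Pp : V → V → V → V → ℝ)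
    (hPp : ∀ X Y Z U, Pp X Y Z U = (1/4) * (⟪Y, Z⟫ * ⟪X, U⟫ - ⟪X, Z⟫ * ⟪Y, U⟫
      + ⟪J Y, Z⟫ * ⟪J X, U⟫ - ⟪J X, Z⟫ * ⟪J Y, U⟫ - 2 * ⟪J X, Y⟫ * ⟪J Z, U⟫))
    (Ph : V → V → V → V → ℝ)
    (hPh : ∀ X Y Z U, Ph X Y Z U = (1/8) * (⟪Y, Z⟫ * h X U - ⟪X, Z⟫ * h Y U
      + ⟪X, U⟫ * h Y Z - ⟪Y, U⟫ * h X Z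
      + ⟪J Y, Z⟫ * h (J X) U - ⟪J X, Z⟫ * h (J Y) U
      + ⟪J X, U⟫ * h (J Y) Z - ⟪J Y, U⟫ * h (J X) Z
      - 2 * ⟪J X, Y⟫ * h (J Z) U - 2 * ⟪J Z, U⟫ * h (J X) Y))
    (Ps : V → V → V → V → ℝ)
    (hPs : ∀ X Y Z U, Ps X Y Z U = -(h (J X) Y * h (J Z) U))
    (K : V → V → V → V → ℝ)
    (hK : ∀ X Y Z U, K X Y Z U = (1/6) * Pp X Y Z U - Ph X Y Z U + Ps X Y Z U) :
    ∀ X Y Z U : V, K X Y Z U + K Y Z X U + K Z X Y U = 0 := by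
  -- obtain a unit vector in D
  have hDne : D ≠ ⊥ := by
    intro hbot
    rw [hbot] at hDdim
    simp at hDdim
  obtain ⟨e, heD, hee⟩ : ∃ e ∈ D, ⟪e, e⟫ = (1 : ℝ) := by
    obtain ⟨d, hdD, hdne⟩ := Submodule.exists_mem_ne_zero_of_ne_bot hDne
    refine ⟨‖d‖⁻¹ • d, D.smul_mem _ hdD, ?_⟩
    rw [real_inner_smul_left, real_inner_smul_right, real_inner_self_eq_norm_sq]
    have : ‖d‖ ≠ 0 := norm_ne_zero_iff.2 hdne
    field_simp
  obtain ⟨f, hf_def⟩ : ∃ f : V, f = J e := ⟨J e, rfl⟩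
  have hfD : f ∈ D := hf_def ▸ hDJ e heD
  have hef : ⟪e, f⟫ = 0 := by
    have h1 := hJskew e e
    have h2 : ⟪J e, e⟫ = ⟪e, J e⟫ := real_inner_comm _ _
    rw [h2] at h1
    rw [hf_def]
    linarith
  have hff : ⟪f, f⟫ = 1 := by
    rw [hf_def, hJskew, hJ2, inner_neg_right, neg_neg, hee]
  have hfe : ⟪f, e⟫ = 0 := by rw [real_inner_comm]; exact hef
  -- D = span {e, f}
  have hli : LinearIndependent ℝ ![e, f] := by
    have hon : Orthonormal ℝ ![e, f] := by
      rw [orthonormal_iff_ite]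
      intro i j
      fin_cases i <;> fin_cases j <;>
        simp [hee, hff, hef, real_inner_comm f e, real_inner_comm e f] <;>
        simp only [norm_eq_sqrt_real_inner e, norm_eq_sqrt_real_inner f, hee, hff, Real.sqrt_one, true_or]
    exact hon.linearIndependent
  have hspan : Submodule.span ℝ {e, f} = D := by
    apply Submodule.eq_of_le_of_finrank_le
    · rw [Submodule.span_le]
      intro z hz
      rcases hz with rfl | hz
      · exact heD
      · simp at hz; subst hz; exact hfD
    · rw [hDdim]
      have : ({e, f} : Set V) = Set.range ![e, f] := by
        simp [Set.range_comp]
        ext z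
        simp [Matrix.range_cons, Matrix.range_empty]
        tauto
      rw [this, finrank_span_eq_card hli]
      simp
  -- projection formula
  have hproj : ∀ x : V, (D.orthogonalProjection x : V) = ⟪e, x⟫ • e + ⟪f, x⟫ • f := by
    intro x
    rw [← Submodule.starProjection_apply]
    apply Submodule.eq_starProjection_of_mem_of_inner_eq_zero
    · exact D.add_mem (D.smul_mem _ heD) (D.smul_mem _ hfD)
    · intro w hw
      rw [← hspan] at hw
      induction hw using Submodule.span_induction with
      | mem z hz =>
        rcases hz with hz | hz
        · rw [hz, inner_sub_left, inner_add_left, real_inner_smul_left, real_inner_smul_left]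
          simp only [hfe, hef, hee, hff, real_inner_comm x e]
          ring
        · simp only [Set.mem_singleton_iff] at hz
          rw [hz, inner_sub_left, inner_add_left, real_inner_smul_left, real_inner_smul_left]
          simp only [hfe, hef, hee, hff, real_inner_comm x f]
          ring
      | zero => simp
      | add _ _ _ _ h1 h2 => rw [inner_add_right, h1, h2]; ring
      | smul a _ _ h1 => rw [inner_smul_right, h1]; ring
  have hh' : ∀ x y, h x y = ⟪e, x⟫ * ⟪e, y⟫ + ⟪f, x⟫ * ⟪f, y⟫ := by
    intro x y
    rw [hh, hproj, hproj]
    rw [inner_add_left, inner_add_right, inner_add_right]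
    rw [real_inner_smul_left, real_inner_smul_left, real_inner_smul_left, real_inner_smul_left,
      real_inner_smul_right, real_inner_smul_right, real_inner_smul_right, real_inner_smul_right]
    simp only [hfe, hef, hee, hff]
    ring
  have hJe : ∀ x : V, ⟪e, J x⟫ = -⟪f, x⟫ := by
    intro x
    rw [real_inner_comm, hJskew, real_inner_comm, hf_def, real_inner_comm]
  have hJf : ∀ x : V, ⟪f, J x⟫ = ⟪e, x⟫ := by
    intro x
    rw [real_inner_comm, hJskew, hf_def, hJ2, inner_neg_right, real_inner_comm]
    ring
  have hpsi : ∀ x y : V, h (J x) y = ⟪e, x⟫ * ⟪f, y⟫ - ⟪f, x⟫ * ⟪e, y⟫ := by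
    intro x y
    rw [hh', hJe, hJf]
    ring
  intro X Y Z U
  rw [hK, hK, hK, hPp X Y Z U, hPp Y Z X U, hPp Z X Y U,
    hPh X Y Z U, hPh Y Z X U, hPh Z X Y U, hPs X Y Z U, hPs Y Z X U, hPs Z X Y U]
  simp only [hpsi]
  simp only [hh']
  have hω : ∀ x y : V, ⟪J x, y⟫ = -⟪J y, x⟫ := by
    intro x y
    rw [hJskew, real_inner_comm]
  simp only [hω Z X, hω Y X, hω Z Y, real_inner_comm Z X, real_inner_comm Y X,
    real_inner_comm Z Y]
  ring
end
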